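/- Let δ : ℤ → ℝ be a sequence with δ n > 0 for all n. Then there exists M ≥ 1 such that δ satisfies the quasisymmetric shear condition with constant M if and only if there exists M′ ≥ 1 such that the piecewise linear developing map h_δ satisfies the M′-quasisymmetry condition. Quantitatively: if h_δ satisfies the M′-quasisymmetry condition, then δ satisfies the quasisymmetric shear condition with constant M′; and if δ satisfies the quasisymmetric shear condition with constant M, then h_δ satisfies the M′-quasisymmetry condition with M′ = max(3M³, M¹⁰). -/

import Mathlib

/-- `Hmap δ n` is the value at the integer `n` of the developing map:
`H 0 = 0`, `H (n+1) = H n + δ n`. -/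
noncomputable def Hmap (δ : ℤ → ℝ) (n : ℤ) : ℝ :=
  if 0 ≤ n then ∑ j ∈ Finset.range n.toNat, δ j
  else -∑ j ∈ Finset.range (-n).toNat, δ (n + j)

/-- The piecewise linear developing map associated to the sequence `δ`. -/
noncomputable def hdev (δ : ℤ → ℝ) (x : ℝ) : ℝ :=
  Hmap δ ⌊x⌋ + δ ⌊x⌋ * (x - (⌊x⌋ : ℝ))

/-- The quasisymmetric shear condition with constant `M` for a positive sequence `δ`:
`1/M ≤ (δ m + ⋯ + δ (m+k)) / (δ (m-1) + ⋯ + δ (m-k-1)) ≤ M`. -/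
def ShearQS (δ : ℤ → ℝ) (M : ℝ) : Prop :=
  ∀ (m : ℤ) (k : ℕ),
    1 / M ≤ (∑ i ∈ Finset.range (k + 1), δ (m + (i : ℤ))) /
        (∑ i ∈ Finset.range (k + 1), δ (m - 1 - (i : ℤ))) ∧
      (∑ i ∈ Finset.range (k + 1), δ (m + (i : ℤ))) /
        (∑ i ∈ Finset.range (k + 1), δ (m - 1 - (i : ℤ))) ≤ M

/-- The `M`-quasisymmetry condition for a map `h : ℝ → ℝ`. -/
def QSCond (h : ℝ → ℝ) (M : ℝ) : Prop :=
  ∀ (x t : ℝ), 0 < t →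
    1 / M ≤ (h (x + t) - h x) / (h x - h (x - t)) ∧
      (h (x + t) - h x) / (h x - h (x - t)) ≤ M

lemma Hmap_zero (δ : ℤ → ℝ) : Hmap δ 0 = 0 := by simp [Hmap]

lemma Hmap_succ (δ : ℤ → ℝ) (n : ℤ) : Hmap δ (n + 1) = Hmap δ n + δ n := by
  rcases le_or_gt 0 n with h | h
  · have h1 : (0:ℤ) ≤ n + 1 := by omega
    have h2 : (n+1).toNat = n.toNat + 1 := by omega
    simp only [Hmap, if_pos h, if_pos h1, h2, Finset.sum_range_succ]
    congr 2
    omega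
  · rcases eq_or_lt_of_le (by omega : n + 1 ≤ 0) with h0 | h0
    · have hn : n = -1 := by omega
      subst hn
      simp [Hmap]
    · have h1 : ¬ (0:ℤ) ≤ n + 1 := by omega
      have h1' : ¬ (0:ℤ) ≤ n := by omega
      simp only [Hmap, if_neg h1, if_neg h1']
      have h2 : (-n).toNat = (-(n+1)).toNat + 1 := by omega
      rw [h2, Finset.sum_range_succ']
      push_cast
      have : ∀ j ∈ Finset.range (-(n+1)).toNat, δ (n + (↑j + 1)) = δ (n + 1 + ↑j) := by
        intro j _; congr 1; ring
      rw [Finset.sum_congr rfl this]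
      ring_nf

lemma Hmap_telescope (δ : ℤ → ℝ) (m : ℤ) : ∀ k : ℕ,
    Hmap δ (m + k) = Hmap δ m + ∑ i ∈ Finset.range k, δ (m + i) := by
  intro k
  induction k with
  | zero => simp
  | succ k ih =>
    have : m + ((k:ℤ) + 1) = (m + k) + 1 := by ring
    push_cast
    rw [this, Hmap_succ, ih, Finset.sum_range_succ]
    push_cast
    ring

lemma hdev_int (δ : ℤ → ℝ) (n : ℤ) : hdev δ (n : ℝ) = Hmap δ n := by
  simp [hdev]

lemma hdev_seg (δ : ℤ → ℝ) (n : ℤ) (x : ℝ) (h1 : (n:ℝ) ≤ x) (h2 : x ≤ (n:ℝ) + 1) :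
    hdev δ x = Hmap δ n + δ n * (x - n) := by
  rcases lt_or_eq_of_le h2 with h2 | h2
  · have : ⌊x⌋ = n := by
      rw [Int.floor_eq_iff]; constructor <;> assumption
    simp [hdev, this]
  · subst h2
    have : ((n:ℝ) + 1) = ((n + 1 : ℤ) : ℝ) := by push_cast; ring
    rw [this, hdev_int, Hmap_succ]
    push_cast
    ring

lemma chord_le_aux (δ : ℤ → ℝ) (c : ℝ) :
    ∀ d : ℕ, ∀ z1 z2 : ℝ, z1 ≤ z2 → (⌊z2⌋ - ⌊z1⌋).toNat = d →
    (∀ j : ℤ, ⌊z1⌋ ≤ j → j ≤ ⌊z2⌋ → δ j ≤ c) →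
    hdev δ z2 - hdev δ z1 ≤ c * (z2 - z1) := by
  intro d
  induction d with
  | zero =>
    intro z1 z2 hle hd hc
    have hfl : ⌊z1⌋ = ⌊z2⌋ := by
      have := Int.floor_le_floor (R := ℝ) hle
      omega
    have h1 : hdev δ z1 = Hmap δ ⌊z1⌋ + δ ⌊z1⌋ * (z1 - ⌊z1⌋) := rfl
    have h2 : hdev δ z2 = Hmap δ ⌊z1⌋ + δ ⌊z1⌋ * (z2 - ⌊z1⌋) := by
      rw [hdev, hfl]
    rw [h1, h2]
    have : δ ⌊z1⌋ ≤ c := hc ⌊z1⌋ le_rfl (by omega)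
    nlinarith [Int.floor_le z1, Int.lt_floor_add_one z1]
  | succ d ih =>
    intro z1 z2 hle hd hc
    have hfl : ⌊z1⌋ < ⌊z2⌋ := by omega
    set z1' : ℝ := ((⌊z1⌋ + 1 : ℤ) : ℝ) with hz1'
    have hfl' : ⌊z1'⌋ = ⌊z1⌋ + 1 := Int.floor_intCast _
    have hle' : z1' ≤ z2 := by
      have : ((⌊z1⌋ + 1 : ℤ) : ℝ) ≤ (⌊z2⌋ : ℝ) := by exact_mod_cast hfl
      exact this.trans (Int.floor_le z2)
    have step : hdev δ z1' - hdev δ z1 ≤ c * (z1' - z1) := by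
      have e1 : hdev δ z1' = Hmap δ ⌊z1⌋ + δ ⌊z1⌋ * (z1' - ⌊z1⌋) := by
        apply hdev_seg <;> push_cast [hz1'] <;> linarith
      have e2 : hdev δ z1 = Hmap δ ⌊z1⌋ + δ ⌊z1⌋ * (z1 - ⌊z1⌋) := rfl
      have hδ : δ ⌊z1⌋ ≤ c := hc ⌊z1⌋ le_rfl (by omega)
      have : (0:ℝ) ≤ z1' - z1 := by
        have := Int.lt_floor_add_one z1
        push_cast [hz1']
        linarith
      rw [e1, e2]
      nlinarith
    have rest : hdev δ z2 - hdev δ z1' ≤ c * (z2 - z1') := by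
      apply ih z1' z2 hle' (by omega)
      intro j hj1 hj2
      exact hc j (by omega) hj2
    linarith

lemma chord_le (δ : ℤ → ℝ) (c : ℝ) (z1 z2 : ℝ) (hle : z1 ≤ z2)
    (hc : ∀ j : ℤ, ⌊z1⌋ ≤ j → j ≤ ⌊z2⌋ → δ j ≤ c) :
    hdev δ z2 - hdev δ z1 ≤ c * (z2 - z1) :=
  chord_le_aux δ c _ z1 z2 hle rfl hc

lemma chord_ge (δ : ℤ → ℝ) (c : ℝ) (z1 z2 : ℝ) (hle : z1 ≤ z2)
    (hc : ∀ j : ℤ, ⌊z1⌋ ≤ j → j ≤ ⌊z2⌋ → c ≤ δ j) :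
    c * (z2 - z1) ≤ hdev δ z2 - hdev δ z1 := by
  have := chord_le (fun n => -δ n) (-c) z1 z2 hle (by intro j h1 h2; simpa using hc j h1 h2)
  have e : ∀ w, hdev (fun n => -δ n) w = -hdev δ w := by
    intro w
    have hh : ∀ n : ℤ, Hmap (fun n => -δ n) n = -Hmap δ n := by
      intro n; unfold Hmap; split <;> simp
    simp [hdev, hh]
    ring
  rw [e, e] at this
  linarith

section mono
variable (δ : ℤ → ℝ)

lemma hdev_mono (hpos : ∀ n, 0 < δ n) (z1 z2 : ℝ) (hle : z1 ≤ z2) : hdev δ z1 ≤ hdev δ z2 := by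
  have := chord_ge δ 0 z1 z2 hle (fun j _ _ => (hpos j).le)
  linarith

lemma hdev_strict (hpos : ∀ n, 0 < δ n) (z1 z2 : ℝ) (hlt : z1 < z2) : hdev δ z1 < hdev δ z2 := by
  rcases eq_or_lt_of_le (Int.floor_le_floor hlt.le) with hfl | hfl
  · have e1 : hdev δ z1 = Hmap δ ⌊z1⌋ + δ ⌊z1⌋ * (z1 - ⌊z1⌋) := rfl
    have e2 : hdev δ z2 = Hmap δ ⌊z1⌋ + δ ⌊z1⌋ * (z2 - ⌊z1⌋) := by rw [hdev, ← hfl]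
    rw [e1, e2]
    nlinarith [hpos ⌊z1⌋]
  · set z1' : ℝ := ((⌊z1⌋ + 1 : ℤ) : ℝ) with hz1'
    have h1 : hdev δ z1 < hdev δ z1' := by
      have e1 : hdev δ z1 = Hmap δ ⌊z1⌋ + δ ⌊z1⌋ * (z1 - ⌊z1⌋) := rfl
      have e2 : hdev δ z1' = Hmap δ ⌊z1⌋ + δ ⌊z1⌋ * (z1' - ⌊z1⌋) := by
        apply hdev_seg <;> push_cast [hz1'] <;> linarith
      rw [e1, e2]
      have := Int.lt_floor_add_one z1
      have h2 : z1 < z1' := by push_cast [hz1']; linarith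
      nlinarith [hpos ⌊z1⌋]
    have h2 : hdev δ z1' ≤ hdev δ z2 := by
      apply hdev_mono δ hpos
      have : ((⌊z1⌋ + 1 : ℤ) : ℝ) ≤ (⌊z2⌋ : ℝ) := by exact_mod_cast hfl
      exact this.trans (Int.floor_le z2)
    linarith

end mono

lemma sum_neg_eq (δ : ℤ → ℝ) (m : ℤ) (k : ℕ) :
    ∑ i ∈ Finset.range (k + 1), δ (m - 1 - (i : ℤ)) = Hmap δ m - Hmap δ (m - (k + 1)) := by
  have h1 := Hmap_telescope δ (m - (k+1)) (k+1)
  have h2 : m - ((k:ℤ)+1) + ((k:ℕ)+1 : ℕ) = m := by push_cast; ring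
  rw [h2] at h1
  rw [h1]
  rw [← Finset.sum_range_reflect (fun i => δ (m - 1 - (i:ℤ))) (k+1)]
  have : ∀ i ∈ Finset.range (k+1), δ (m - 1 - ((k + 1 - 1 - i : ℕ) : ℤ)) = δ (m - ((k:ℤ)+1) + (i:ℤ)) := by
    intro i hi
    simp only [Finset.mem_range] at hi
    congr 1
    have : ((k + 1 - 1 - i : ℕ) : ℤ) = (k : ℤ) - i := by omega
    rw [this]; ring
  rw [Finset.sum_congr rfl this]
  ring

section shear
variable {δ : ℤ → ℝ} {M : ℝ}

lemma sumP_pos (hpos : ∀ n, 0 < δ n) (m : ℤ) (k : ℕ) :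
    0 < ∑ i ∈ Finset.range (k + 1), δ (m + (i : ℤ)) :=
  Finset.sum_pos (fun i _ => hpos _) ⟨0, Finset.mem_range.2 (Nat.succ_pos k)⟩

lemma sumN_pos (hpos : ∀ n, 0 < δ n) (m : ℤ) (k : ℕ) :
    0 < ∑ i ∈ Finset.range (k + 1), δ (m - 1 - (i : ℤ)) :=
  Finset.sum_pos (fun i _ => hpos _) ⟨0, Finset.mem_range.2 (Nat.succ_pos k)⟩

lemma shearH (hpos : ∀ n, 0 < δ n) (hM : 1 ≤ M) (hs : ShearQS δ M) (m : ℤ) (k : ℕ) :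
    Hmap δ (m + (k + 1)) - Hmap δ m ≤ M * (Hmap δ m - Hmap δ (m - (k + 1))) ∧
      Hmap δ m - Hmap δ (m - (k + 1)) ≤ M * (Hmap δ (m + (k + 1)) - Hmap δ m) := by
  obtain ⟨h1, h2⟩ := hs m k
  have hN := sumP_pos hpos m k
  have hD := sumN_pos hpos m k
  have hM0 : 0 < M := by linarith
  have e1 : ∑ i ∈ Finset.range (k + 1), δ (m + (i : ℤ)) = Hmap δ (m + (k + 1)) - Hmap δ m := by
    have := Hmap_telescope δ m (k+1)
    push_cast at this ⊢
    linarith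
  have e2 := sum_neg_eq δ m k
  rw [e1] at hN
  rw [e2] at hD
  rw [e1, e2] at h1 h2
  constructor
  · rw [div_le_iff₀ hD] at h2
    nlinarith
  · rw [div_le_div_iff₀ hM0 hD] at h1
    nlinarith

lemma step_lemma (hpos : ∀ n, 0 < δ n) (hM : 1 ≤ M) (hs : ShearQS δ M) (m : ℤ) :
    δ m ≤ M * δ (m - 1) ∧ δ (m - 1) ≤ M * δ m := by
  obtain ⟨h1, h2⟩ := hs m 0
  norm_num [Finset.sum_range_one] at h1 h2
  have hM0 : 0 < M := by linarith
  have hp := hpos m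
  have hp' := hpos (m-1)
  constructor
  · rw [div_le_iff₀ hp'] at h2; linarith
  · rw [inv_eq_one_div, div_le_div_iff₀ hM0 hp'] at h1; nlinarith

lemma geom_lemma (hpos : ∀ n, 0 < δ n) (hM : 1 ≤ M) (hs : ShearQS δ M) :
    ∀ d : ℕ, ∀ a : ℤ, δ (a + d) ≤ M ^ d * δ a ∧ δ a ≤ M ^ d * δ (a + d) := by
  intro d
  induction d with
  | zero => intro a; simp
  | succ d ih =>
    intro a
    obtain ⟨ih1, ih2⟩ := ih a
    obtain ⟨s1, s2⟩ := step_lemma hpos hM hs (a + d + 1)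
    have e : a + d + 1 - 1 = a + (d:ℤ) := by ring
    rw [e] at s1 s2
    have hM0 : 0 < M := by linarith
    have e2 : a + ((d:ℤ) + 1) = a + d + 1 := by ring
    push_cast
    rw [e2]
    have hMd : (0:ℝ) < M ^ d := pow_pos hM0 d
    constructor
    · calc δ (a + d + 1) ≤ M * δ (a + d) := s1
        _ ≤ M * (M ^ d * δ a) := by nlinarith
        _ = M ^ (d+1) * δ a := by ring
    · calc δ a ≤ M ^ d * δ (a + d) := ih2
        _ ≤ M ^ d * (M * δ (a + d + 1)) := by nlinarith [hpos (a+d), hpos (a+d+1)]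
        _ = M ^ (d+1) * δ (a + d + 1) := by ring

lemma close_lemma (hpos : ∀ n, 0 < δ n) (hM : 1 ≤ M) (hs : ShearQS δ M)
    (a b : ℤ) (h : (a - b).natAbs ≤ 5) : δ a ≤ M ^ 5 * δ b := by
  have hM0 : 0 < M := by linarith
  set d : ℕ := (a - b).natAbs with hd
  have hMd : M ^ d ≤ M ^ 5 := pow_le_pow_right₀ hM h
  rcases le_or_gt b a with hab | hab
  · have : a = b + d := by omega
    rw [this]
    have := (geom_lemma hpos hM hs d b).1
    nlinarith [hpos b, pow_pos hM0 d]
  · have hb : b = a + d := by omega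
    have h2 := (geom_lemma hpos hM hs d a).2
    rw [hb]
    nlinarith [pow_pos hM0 d, hpos (a + (d:ℤ))]

lemma Hmap_mono (hpos : ∀ n, 0 < δ n) {a b : ℤ} (hab : a ≤ b) : Hmap δ a ≤ Hmap δ b := by
  rw [← hdev_int, ← hdev_int]
  exact hdev_mono δ hpos _ _ (by exact_mod_cast hab)

lemma hdev_le_Hmap (hpos : ∀ n, 0 < δ n) {z : ℝ} {a : ℤ} (h : z ≤ (a:ℝ)) :
    hdev δ z ≤ Hmap δ a := by
  rw [← hdev_int]; exact hdev_mono δ hpos _ _ h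

lemma Hmap_le_hdev (hpos : ∀ n, 0 < δ n) {a : ℤ} {z : ℝ} (h : (a:ℝ) ≤ z) :
    Hmap δ a ≤ hdev δ z := by
  rw [← hdev_int]; exact hdev_mono δ hpos _ _ h

set_option maxHeartbeats 2000000 in
lemma upper_bound (hpos : ∀ n, 0 < δ n) (hM : 1 ≤ M) (hs : ShearQS δ M) (x t : ℝ) (ht : 0 < t) :
    hdev δ (x + t) - hdev δ x ≤ max (3 * M ^ 3) (M ^ 10) * (hdev δ x - hdev δ (x - t)) := by
  have hM0 : 0 < M := by linarith
  set L : ℝ := max (3 * M ^ 3) (M ^ 10) with hL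
  have hL3 : 3 * M ^ 3 ≤ L := le_max_left _ _
  have hL10 : M ^ 10 ≤ L := le_max_right _ _
  have hM3 : (0:ℝ) < M ^ 3 := pow_pos hM0 3
  have hL0 : (0:ℝ) < L := lt_of_lt_of_le (by positivity) hL3
  set n : ℤ := ⌊x⌋ with hn
  have hnx : (n:ℝ) ≤ x := Int.floor_le x
  have hxn : x < (n:ℝ) + 1 := Int.lt_floor_add_one x
  have hx_eq : hdev δ x = Hmap δ n + δ n * (x - n) := rfl
  have hδn := hpos n
  rcases le_or_gt t 5 with ht5 | ht5
  · -- small case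
    have hub : hdev δ (x + t) - hdev δ x ≤ (M ^ 5 * δ n) * t := by
      have := chord_le δ (M ^ 5 * δ n) x (x + t) (by linarith) ?_
      · linarith [this]
      intro j hj1 hj2
      apply close_lemma hpos hM hs
      have hfu : ⌊x + t⌋ ≤ n + 5 := by
        have : x + t < ((n + 6 : ℤ) : ℝ) := by push_cast; linarith
        have := Int.floor_lt.2 this
        omega
      rw [← hn] at hj1
      omega
    have hlb : (δ n / M ^ 5) * t ≤ hdev δ x - hdev δ (x - t) := by
      have := chord_ge δ (δ n / M ^ 5) (x - t) x (by linarith) ?_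
      · linarith [this]
      intro j hj1 hj2
      rw [div_le_iff₀ (by positivity)]
      have hfd : n - 5 ≤ ⌊x - t⌋ := by
        apply Int.le_floor.2
        push_cast
        linarith
      have := close_lemma hpos hM hs n j (by rw [← hn] at hj2; omega)
      linarith
    have h5 : (0:ℝ) < M ^ 5 := by positivity
    have key : (M ^ 5 * δ n) * t = M ^ 10 * ((δ n / M ^ 5) * t) := by
      field_simp
    have hD0 : (0:ℝ) ≤ (δ n / M ^ 5) * t := by positivity
    calc hdev δ (x + t) - hdev δ x ≤ (M ^ 5 * δ n) * t := hub
      _ = M ^ 10 * ((δ n / M ^ 5) * t) := key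
      _ ≤ M ^ 10 * (hdev δ x - hdev δ (x - t)) := by
          apply mul_le_mul_of_nonneg_left hlb (by positivity)
      _ ≤ L * (hdev δ x - hdev δ (x - t)) := by
          apply mul_le_mul_of_nonneg_right hL10
          linarith
  · -- large case
    set K : ℕ := ⌊t⌋.toNat with hK
    have hKt : ((K:ℤ):ℝ) ≤ t := by
      rw [hK]
      have h0 : (0:ℤ) ≤ ⌊t⌋ := Int.le_floor.2 (by norm_num; linarith)
      have : ((⌊t⌋.toNat : ℤ) : ℝ) = ((⌊t⌋ : ℤ) : ℝ) := by norm_cast; omega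
      rw [this]
      exact Int.floor_le t
    have htK : t < ((K:ℤ):ℝ) + 1 := by
      rw [hK]
      have h0 : (0:ℤ) ≤ ⌊t⌋ := Int.le_floor.2 (by norm_num; linarith)
      have : ((⌊t⌋.toNat : ℤ) : ℝ) = ((⌊t⌋ : ℤ) : ℝ) := by norm_cast; omega
      rw [this]
      exact Int.lt_floor_add_one t
    have hKt' : (K:ℝ) ≤ t := by push_cast at hKt ⊢; exact hKt
    have htK' : t < (K:ℝ) + 1 := by push_cast at htK ⊢; exact htK
    have hK5 : 5 ≤ K := by
      by_contra hcon
      push_neg at hcon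
      have : ((K:ℤ):ℝ) + 1 ≤ 5 := by
        have : (K:ℤ) + 1 ≤ 5 := by omega
        exact_mod_cast this
      linarith
    rcases le_or_gt (x - t) ((n:ℝ) - K) with hca | hca
    · -- subcase a
      have hN : hdev δ (x + t) - hdev δ x ≤ Hmap δ (n + K + 2) - Hmap δ n := by
        have h1 : hdev δ (x + t) ≤ Hmap δ (n + K + 2) :=
          hdev_le_Hmap hpos (by push_cast; linarith)
        have h2 : Hmap δ n ≤ hdev δ x := Hmap_le_hdev hpos hnx
        linarith
      have hD : Hmap δ n - Hmap δ (n - K) ≤ hdev δ x - hdev δ (x - t) := by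
        have h1 : hdev δ (x - t) ≤ Hmap δ (n - K) :=
          hdev_le_Hmap hpos (by push_cast; linarith)
        have h2 : Hmap δ n ≤ hdev δ x := Hmap_le_hdev hpos hnx
        linarith
      have hsh := (shearH hpos hM hs n (K + 1)).1
      push_cast at hsh
      rw [show n + ((K:ℤ) + 1 + 1) = n + K + 2 from by ring,
        show n - ((K:ℤ) + 1 + 1) = n - K - 2 from by ring] at hsh
      have d1 : Hmap δ (n - K) = Hmap δ (n - K - 1) + δ (n - K - 1) := by
        have h := Hmap_succ δ (n - K - 1)
        rw [show n - (K:ℤ) - 1 + 1 = n - K from by ring] at h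
        exact h
      have d2 : Hmap δ (n - K - 1) = Hmap δ (n - K - 2) + δ (n - K - 2) := by
        have h := Hmap_succ δ (n - K - 2)
        rw [show n - (K:ℤ) - 2 + 1 = n - K - 1 from by ring] at h
        exact h
      have s1 : δ (n - K - 1) ≤ M * δ (n - K) := (step_lemma hpos hM hs (n - K)).2
      have s2 : δ (n - K - 2) ≤ M ^ 2 * δ (n - K) := by
        have h := (geom_lemma hpos hM hs 2 (n - K - 2)).2
        rw [show n - (K:ℤ) - 2 + ((2:ℕ):ℤ) = n - K from by push_cast; ring] at h
        exact h
      have dK : δ (n - K) ≤ Hmap δ n - Hmap δ (n - K) := by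
        have hm : Hmap δ (n - K + 1) ≤ Hmap δ n := Hmap_mono hpos (by omega)
        have h := Hmap_succ δ (n - K)
        linarith
      have hD0pos : 0 < Hmap δ n - Hmap δ (n - K) := lt_of_lt_of_le (hpos _) dK
      have final : Hmap δ (n + K + 2) - Hmap δ n ≤ 3 * M ^ 3 * (Hmap δ n - Hmap δ (n - K)) := by
        have b1 : M * δ (n - K) ≤ M * (Hmap δ n - Hmap δ (n - K)) :=
          mul_le_mul_of_nonneg_left dK hM0.le
        have b2 : M ^ 2 * δ (n - K) ≤ M ^ 2 * (Hmap δ n - Hmap δ (n - K)) :=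
          mul_le_mul_of_nonneg_left dK (by positivity)
        have e : Hmap δ n - Hmap δ (n - K - 2) ≤ (1 + M + M ^ 2) * (Hmap δ n - Hmap δ (n - K)) := by
          linarith
        have e2 : M * (Hmap δ n - Hmap δ (n - K - 2)) ≤
            M * ((1 + M + M ^ 2) * (Hmap δ n - Hmap δ (n - K))) :=
          mul_le_mul_of_nonneg_left e hM0.le
        have q : M * (1 + M + M ^ 2) ≤ 3 * M ^ 3 := by nlinarith [sq_nonneg (M - 1), hM0, hM]
        have e3 : M * ((1 + M + M ^ 2) * (Hmap δ n - Hmap δ (n - K))) ≤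
            3 * M ^ 3 * (Hmap δ n - Hmap δ (n - K)) := by
          rw [← mul_assoc]
          exact mul_le_mul_of_nonneg_right q (by linarith)
        linarith
      calc hdev δ (x + t) - hdev δ x ≤ Hmap δ (n + K + 2) - Hmap δ n := hN
        _ ≤ 3 * M ^ 3 * (Hmap δ n - Hmap δ (n - K)) := final
        _ ≤ L * (Hmap δ n - Hmap δ (n - K)) := by
            apply mul_le_mul_of_nonneg_right hL3 (by linarith)
        _ ≤ L * (hdev δ x - hdev δ (x - t)) := by
            apply mul_le_mul_of_nonneg_left hD (by linarith)
    · -- common facts for b1/b2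
      have hDge : hdev δ (x - t) ≤ Hmap δ (n - K + 1) :=
        hdev_le_Hmap hpos (by push_cast; linarith)
      have d1 : Hmap δ (n - K + 1) = Hmap δ (n - K) + δ (n - K) := Hmap_succ δ (n - K)
      have s1 : δ (n - K) ≤ M * δ (n - K + 1) := by
        have h := (step_lemma hpos hM hs (n - K + 1)).2
        rw [show n - (K:ℤ) + 1 - 1 = n - K from by ring] at h
        exact h
      have dK1 : δ (n - K + 1) ≤ Hmap δ n - Hmap δ (n - K + 1) := by
        have hm : Hmap δ (n - K + 1 + 1) ≤ Hmap δ n := Hmap_mono hpos (by omega)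
        have h := Hmap_succ δ (n - K + 1)
        linarith
      have hD1pos : 0 < Hmap δ n - Hmap δ (n - K + 1) := lt_of_lt_of_le (hpos _) dK1
      rcases lt_or_ge (x + t) ((n:ℝ) + K + 1) with hcb | hcb
      · -- subcase b1
        have hN : hdev δ (x + t) - hdev δ x ≤ Hmap δ (n + K + 1) - Hmap δ n := by
          have h1 : hdev δ (x + t) ≤ Hmap δ (n + K + 1) :=
            hdev_le_Hmap hpos (by push_cast; linarith)
          have h2 : Hmap δ n ≤ hdev δ x := Hmap_le_hdev hpos hnx
          linarith
        have hD : Hmap δ n - Hmap δ (n - K + 1) ≤ hdev δ x - hdev δ (x - t) := by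
          have h2 : Hmap δ n ≤ hdev δ x := Hmap_le_hdev hpos hnx
          linarith
        have hsh := (shearH hpos hM hs n K).1
        push_cast at hsh
        rw [show n + ((K:ℤ) + 1) = n + K + 1 from by ring,
          show n - ((K:ℤ) + 1) = n - K - 1 from by ring] at hsh
        have d2 : Hmap δ (n - K) = Hmap δ (n - K - 1) + δ (n - K - 1) := by
          have h := Hmap_succ δ (n - K - 1)
          rw [show n - (K:ℤ) - 1 + 1 = n - K from by ring] at h
          exact h
        have s2 : δ (n - K - 1) ≤ M ^ 2 * δ (n - K + 1) := by
          have h := (geom_lemma hpos hM hs 2 (n - K - 1)).2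
          rw [show n - (K:ℤ) - 1 + ((2:ℕ):ℤ) = n - K + 1 from by push_cast; ring] at h
          exact h
        have final : Hmap δ (n + K + 1) - Hmap δ n ≤
            3 * M ^ 3 * (Hmap δ n - Hmap δ (n - K + 1)) := by
          have b1 : M * δ (n - K + 1) ≤ M * (Hmap δ n - Hmap δ (n - K + 1)) :=
            mul_le_mul_of_nonneg_left dK1 hM0.le
          have b2 : M ^ 2 * δ (n - K + 1) ≤ M ^ 2 * (Hmap δ n - Hmap δ (n - K + 1)) :=
            mul_le_mul_of_nonneg_left dK1 (by positivity)
          have e : Hmap δ n - Hmap δ (n - K - 1) ≤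
              (1 + M + M ^ 2) * (Hmap δ n - Hmap δ (n - K + 1)) := by
            linarith
          have e2 : M * (Hmap δ n - Hmap δ (n - K - 1)) ≤
              M * ((1 + M + M ^ 2) * (Hmap δ n - Hmap δ (n - K + 1))) :=
            mul_le_mul_of_nonneg_left e hM0.le
          have q : M * (1 + M + M ^ 2) ≤ 3 * M ^ 3 := by nlinarith [sq_nonneg (M - 1), hM0, hM]
          have e3 : M * ((1 + M + M ^ 2) * (Hmap δ n - Hmap δ (n - K + 1))) ≤
              3 * M ^ 3 * (Hmap δ n - Hmap δ (n - K + 1)) := by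
            rw [← mul_assoc]
            exact mul_le_mul_of_nonneg_right q (by linarith)
          linarith
        calc hdev δ (x + t) - hdev δ x ≤ Hmap δ (n + K + 1) - Hmap δ n := hN
          _ ≤ 3 * M ^ 3 * (Hmap δ n - Hmap δ (n - K + 1)) := final
          _ ≤ L * (Hmap δ n - Hmap δ (n - K + 1)) :=
              mul_le_mul_of_nonneg_right hL3 (by linarith)
          _ ≤ L * (hdev δ x - hdev δ (x - t)) :=
              mul_le_mul_of_nonneg_left hD (by linarith)
      · -- subcase b2
        have hu2 : (1:ℝ)/2 < x - n := by linarith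
        have hu1 : x - (n:ℝ) < 1 := by linarith
        have hNle : hdev δ (x + t) ≤ Hmap δ (n + K + 2) :=
          hdev_le_Hmap hpos (by push_cast; linarith)
        have e_n1 : Hmap δ (n + 1) = Hmap δ n + δ n := Hmap_succ δ n
        have hsh := (shearH hpos hM hs (n + 1) K).1
        push_cast at hsh
        rw [show n + 1 + ((K:ℤ) + 1) = n + K + 2 from by ring,
          show n + 1 - ((K:ℤ) + 1) = n - K from by ring] at hsh
        set u : ℝ := x - (n:ℝ) with hu
        set D1 : ℝ := Hmap δ n - Hmap δ (n - K + 1) with hD1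
        have m1 : M * (Hmap δ (n + 1) - Hmap δ (n - K)) =
            M * δ n + M * D1 + M * δ (n - K) := by
          rw [hD1]
          have e : Hmap δ (n + 1) - Hmap δ (n - K) =
              δ n + (Hmap δ n - Hmap δ (n - K + 1)) + δ (n - K) := by linarith
          rw [e]; ring
        have m2 : M * δ (n - K) ≤ M ^ 2 * δ (n - K + 1) := by
          have := mul_le_mul_of_nonneg_left s1 hM0.le
          nlinarith [this]
        have m3 : M ^ 2 * δ (n - K + 1) ≤ M ^ 2 * D1 :=
          mul_le_mul_of_nonneg_left dK1 (by positivity)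
        have hMM3 : M ≤ M ^ 3 := by nlinarith [hM, hM0]
        have c1 : M * D1 ≤ M ^ 3 * D1 := mul_le_mul_of_nonneg_right hMM3 (by linarith)
        have c2 : M ^ 2 * D1 ≤ M ^ 3 * D1 := by
          apply mul_le_mul_of_nonneg_right _ (le_of_lt hD1pos)
          nlinarith [hM, hM0]
        have q2 : M + (1 - u) ≤ 3 * M ^ 3 * u := by
          have a1 : 0 ≤ (M ^ 3 - M) * u := mul_nonneg (by linarith) (by linarith)
          nlinarith [a1, hu2, hM]
        have p2 : (M + (1 - u)) * δ n ≤ 3 * M ^ 3 * u * δ n :=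
          mul_le_mul_of_nonneg_right q2 hδn.le
        have hxe : hdev δ x = Hmap δ n + δ n * u := hx_eq
        have key : Hmap δ (n + K + 2) - hdev δ x ≤ 3 * M ^ 3 * (hdev δ x - Hmap δ (n - K + 1)) := by
          rw [hxe]
          have expand : Hmap δ n + δ n * u - Hmap δ (n - K + 1) = δ n * u + D1 := by
            rw [hD1]; ring
          rw [expand]
          have goal2 : Hmap δ (n + K + 2) - Hmap δ (n + 1) ≤ M * δ n + M ^ 3 * D1 + M ^ 3 * D1 := by
            linarith
          have rearr : 3 * M ^ 3 * (δ n * u + D1) = 3 * M ^ 3 * u * δ n + 3 * M ^ 3 * D1 := by ring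
          rw [rearr]
          nlinarith [goal2, p2, e_n1, hD1pos, hδn]
        have hpos2 : 0 < hdev δ x - Hmap δ (n - K + 1) := by
          rw [hxe]
          have h0 : (0:ℝ) ≤ δ n * u := mul_nonneg hδn.le (by linarith)
          linarith
        calc hdev δ (x + t) - hdev δ x ≤ Hmap δ (n + K + 2) - hdev δ x := by linarith
          _ ≤ 3 * M ^ 3 * (hdev δ x - Hmap δ (n - K + 1)) := key
          _ ≤ L * (hdev δ x - Hmap δ (n - K + 1)) :=
              mul_le_mul_of_nonneg_right hL3 (by linarith)
          _ ≤ L * (hdev δ x - hdev δ (x - t)) :=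
              mul_le_mul_of_nonneg_left (by linarith) (by linarith)


lemma Hmap_reflect (δ : ℤ → ℝ) : ∀ n : ℤ, Hmap (fun m => δ (-1 - m)) n = -Hmap δ (-n) := by
  intro n
  induction n using Int.induction_on with
  | zero => simp [Hmap]
  | succ k ih =>
    rw [Hmap_succ, ih]
    have e : -(k + 1 : ℤ) = -k - 1 := by ring
    rw [e]
    have h2 := Hmap_succ δ (-k - 1)
    rw [show (-k - 1 + 1 : ℤ) = -k from by ring] at h2
    have e2 : (-1 - k : ℤ) = -k - 1 := by ring
    rw [e2]
    linarith
  | pred k ih =>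
    have h1 := Hmap_succ (fun m => δ (-1 - m)) (-k - 1)
    rw [show (-k - 1 + 1 : ℤ) = -k from by ring] at h1
    rw [show (-(k:ℤ) - 1) = -k - 1 from rfl]
    have h2 := Hmap_succ δ k
    have e3 : -(-k - 1 : ℤ) = k + 1 := by ring
    rw [e3]
    rw [ih] at h1
    rw [neg_neg] at h1
    have e4 : (-1 - (-k - 1) : ℤ) = k := by ring
    rw [e4] at h1
    rw [h2]
    linarith

lemma hdev_reflect (δ : ℤ → ℝ) (x : ℝ) :
    hdev (fun m => δ (-1 - m)) x = -hdev δ (-x) := by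
  set n : ℤ := ⌊x⌋ with hn
  have hnx : (n:ℝ) ≤ x := Int.floor_le x
  have hxn : x ≤ (n:ℝ) + 1 := (Int.lt_floor_add_one x).le
  have e1 : hdev (fun m => δ (-1 - m)) x = Hmap (fun m => δ (-1 - m)) n + δ (-1 - n) * (x - n) :=
    hdev_seg _ n x hnx hxn
  have e2 : hdev δ (-x) = Hmap δ (-n - 1) + δ (-n - 1) * (-x - ((-n - 1 : ℤ) : ℝ)) := by
    apply hdev_seg δ (-n - 1) (-x) <;> push_cast <;> linarith
  have e3 := Hmap_reflect δ n
  have e4 := Hmap_succ δ (-n - 1)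
  rw [show (-n - 1 + 1 : ℤ) = -n from by ring] at e4
  have e5 : (-1 - n : ℤ) = -n - 1 := by ring
  rw [e1, e2, e5, e3, e4]
  push_cast
  ring

lemma shear_reflect {δ : ℤ → ℝ} {M : ℝ} (hpos : ∀ n, 0 < δ n) (hM : 1 ≤ M)
    (hs : ShearQS δ M) : ShearQS (fun m => δ (-1 - m)) M := by
  intro m k
  have hM0 : 0 < M := by linarith
  obtain ⟨h1, h2⟩ := hs (-m) k
  have hN := sumP_pos hpos (-m) k
  have hD := sumN_pos hpos (-m) k
  have eA : ∑ i ∈ Finset.range (k + 1), (fun m => δ (-1 - m)) (m + (i : ℤ)) =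
      ∑ i ∈ Finset.range (k + 1), δ (-m - 1 - (i : ℤ)) := by
    apply Finset.sum_congr rfl
    intro i _
    simp only
    congr 1
    ring
  have eB : ∑ i ∈ Finset.range (k + 1), (fun m => δ (-1 - m)) (m - 1 - (i : ℤ)) =
      ∑ i ∈ Finset.range (k + 1), δ (-m + (i : ℤ)) := by
    apply Finset.sum_congr rfl
    intro i _
    simp only
    congr 1
    ring
  rw [eA, eB]
  rw [div_le_div_iff₀ hM0 hD] at h1
  rw [div_le_iff₀ hD] at h2
  constructor
  · rw [div_le_div_iff₀ hM0 hN]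
    linarith
  · rw [div_le_iff₀ hN]
    linarith

set_option maxHeartbeats 1000000 in
lemma lower_bound {δ : ℤ → ℝ} {M : ℝ} (hpos : ∀ n, 0 < δ n) (hM : 1 ≤ M) (hs : ShearQS δ M)
    (x t : ℝ) (ht : 0 < t) :
    hdev δ x - hdev δ (x - t) ≤ max (3 * M ^ 3) (M ^ 10) * (hdev δ (x + t) - hdev δ x) := by
  have hposr : ∀ n, 0 < (fun m => δ (-1 - m)) n := fun n => hpos _
  have := upper_bound hposr hM (shear_reflect hpos hM hs) (-x) t ht
  rw [hdev_reflect, hdev_reflect, hdev_reflect] at this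
  rw [show -(-x + t) = x - t from by ring, show -(-x - t) = x + t from by ring,
    neg_neg] at this
  linarith

theorem shear_characterization_single_fan (δ : ℤ → ℝ) (hpos : ∀ n, 0 < δ n) :
    ((∃ M : ℝ, 1 ≤ M ∧ ShearQS δ M) ↔ (∃ M' : ℝ, 1 ≤ M' ∧ QSCond (hdev δ) M')) ∧
      (∀ M' : ℝ, 1 ≤ M' → QSCond (hdev δ) M' → ShearQS δ M') ∧
      (∀ M : ℝ, 1 ≤ M → ShearQS δ M → QSCond (hdev δ) (max (3 * M ^ 3) (M ^ 10))) := by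
  have part2 : ∀ M' : ℝ, 1 ≤ M' → QSCond (hdev δ) M' → ShearQS δ M' := by
    intro M' hM' hq m k
    have ht : (0:ℝ) < (k:ℝ) + 1 := by positivity
    obtain ⟨h1, h2⟩ := hq (m:ℝ) ((k:ℝ) + 1) ht
    have eN : hdev δ ((m:ℝ) + ((k:ℝ) + 1)) - hdev δ (m:ℝ) =
        ∑ i ∈ Finset.range (k + 1), δ (m + (i : ℤ)) := by
      have e : ((m:ℝ) + ((k:ℝ) + 1)) = ((m + ((k:ℤ) + 1) : ℤ) : ℝ) := by push_cast; ring
      rw [e, hdev_int, hdev_int]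
      have h := Hmap_telescope δ m (k + 1)
      push_cast at h
      linarith
    have eD : hdev δ (m:ℝ) - hdev δ ((m:ℝ) - ((k:ℝ) + 1)) =
        ∑ i ∈ Finset.range (k + 1), δ (m - 1 - (i : ℤ)) := by
      have e : ((m:ℝ) - ((k:ℝ) + 1)) = ((m - ((k:ℤ) + 1) : ℤ) : ℝ) := by push_cast; ring
      rw [e, hdev_int, hdev_int]
      have h := sum_neg_eq δ m k
      push_cast at h ⊢
      linarith
    rw [← eN, ← eD]
    exact ⟨h1, h2⟩
  have part3 : ∀ M : ℝ, 1 ≤ M → ShearQS δ M → QSCond (hdev δ) (max (3 * M ^ 3) (M ^ 10)) := by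
    intro M hM hs x t ht
    have hM0 : (0:ℝ) < M := by linarith
    have hL0 : (0:ℝ) < max (3 * M ^ 3) (M ^ 10) :=
      lt_of_lt_of_le (by positivity) (le_max_left _ _)
    have hN : 0 < hdev δ (x + t) - hdev δ x := by
      have := hdev_strict δ hpos x (x + t) (by linarith)
      linarith
    have hD : 0 < hdev δ x - hdev δ (x - t) := by
      have := hdev_strict δ hpos (x - t) x (by linarith)
      linarith
    have hup := upper_bound hpos hM hs x t ht
    have hlo := lower_bound hpos hM hs x t ht
    constructor
    · rw [div_le_div_iff₀ hL0 hD]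
      nlinarith
    · rw [div_le_iff₀ hD]
      exact hup
  have one_le_pow10 : ∀ M : ℝ, 1 ≤ M → (1:ℝ) ≤ max (3 * M ^ 3) (M ^ 10) := by
    intro M hM
    refine le_trans ?_ (le_max_right _ _)
    calc (1:ℝ) = 1 ^ 10 := by norm_num
      _ ≤ M ^ 10 := pow_le_pow_left₀ (by norm_num) hM 10
  refine ⟨⟨?_, ?_⟩, part2, part3⟩
  · rintro ⟨M, hM, hs⟩
    exact ⟨max (3 * M ^ 3) (M ^ 10), one_le_pow10 M hM, part3 M hM hs⟩
  · rintro ⟨M', hM', hq⟩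
    exact ⟨M', hM', part2 M' hM' hq⟩
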